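/- The operator with kernel ρ(y,x) e_{y-x} ⊗ e_{y-x}, where |ρ(y,x)| ≤ C·χ_{|y-x|<ε}/|y-x|, is bounded on L²(Ω;ℝ^d): the operator w ↦ ∫_Ω ρ(y,x)((w(y)-w(x))·e_{y-x}) e_{y-x} dy satisfies ‖Dw‖_{L²} ≤ (C'/ε²)‖w‖_{L²} with C' independent of ε. -/

import Mathlib

open MeasureTheory
open scoped RealInnerProductSpace

open Metric Set Function
open scoped ENNReal Classical

/-- The unit vector `e_{y-x} = (y-x)/|y-x|`. -/
noncomputable def unitVec {d : ℕ} (y x : EuclideanSpace ℝ (Fin d)) :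
    EuclideanSpace ℝ (Fin d) := ‖y - x‖⁻¹ • (y - x)


lemma polar_bound (n : ℕ) {ε : ℝ} (hε : 0 < ε) :
    ∫⁻ y in ball (0 : EuclideanSpace ℝ (Fin (n + 2))) ε, ENNReal.ofReal ‖y‖⁻¹ ≤
      2 * volume (ball (0 : EuclideanSpace ℝ (Fin (n + 2))) 1) *
        ENNReal.ofReal (ε ^ (n + 1)) := by
  set E := EuclideanSpace ℝ (Fin (n + 2)) with hE
  haveI : Nontrivial E := inferInstance
  have hdim : Module.finrank ℝ E = n + 2 := finrank_euclideanSpace_fin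
  set f : ℝ → ℝ≥0∞ := fun r => (Iio ε).indicator (fun r => ENNReal.ofReal r⁻¹) r with hf_def
  have hf : Measurable f :=
    (ENNReal.measurable_ofReal.comp measurable_inv).indicator measurableSet_Iio
  have h1 : ∫⁻ y in ball (0 : E) ε, ENNReal.ofReal ‖y‖⁻¹ = ∫⁻ y : E, f ‖y‖ := by
    rw [← lintegral_indicator measurableSet_ball]
    refine lintegral_congr fun y => ?_
    show (ball (0 : E) ε).indicator (fun y => ENNReal.ofReal ‖y‖⁻¹) y =
      (Iio ε).indicator (fun r => ENNReal.ofReal r⁻¹) ‖y‖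
    by_cases h : ‖y‖ < ε
    · rw [Set.indicator_of_mem (mem_ball_zero_iff.mpr h),
        Set.indicator_of_mem (mem_Iio.mpr h)]
    · rw [Set.indicator_of_notMem (fun hm => h (mem_ball_zero_iff.mp hm)),
        Set.indicator_of_notMem (fun hm => h (mem_Iio.mp hm))]
  have h2 : ∫⁻ y : E, f ‖y‖ =
      (volume : Measure E).toSphere Set.univ *
        ∫⁻ r : Ioi (0 : ℝ), f r ∂(MeasureTheory.Measure.volumeIoiPow (n + 1)) := by
    have e1 : ∫⁻ x : ({0}ᶜ : Set E), f ‖(x : E)‖ ∂((volume : Measure E).comap Subtype.val) =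
        ∫⁻ y : E, f ‖y‖ :=
      (lintegral_subtype_comap (measurableSet_singleton (0 : E)).compl
        (fun y : E => f ‖y‖)).trans (by rw [MeasureTheory.restrict_compl_singleton])
    have hmeas : Measurable fun p : (sphere (0 : E) 1) × (Ioi (0 : ℝ)) => f (p.2 : ℝ) :=
      hf.comp (measurable_subtype_coe.comp measurable_snd)
    have hcomp := (Measure.measurePreserving_homeomorphUnitSphereProd
        (volume : Measure E)).lintegral_comp (f := fun p => f (p.2 : ℝ))
        (hf.comp (measurable_subtype_coe.comp measurable_snd))
    simp only [homeomorphUnitSphereProd_apply_snd_coe] at hcomp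
    rw [← e1, hcomp, hdim]
    rw [MeasureTheory.lintegral_prod (fun p : (sphere (0 : E) 1) × (Ioi (0 : ℝ)) => f p.2.1) hmeas.aemeasurable]
    trans ∫⁻ _x : sphere (0 : E) 1, (∫⁻ r : Ioi (0 : ℝ), f r
      ∂(MeasureTheory.Measure.volumeIoiPow (n + 1))) ∂(volume : Measure E).toSphere
    · rfl
    rw [lintegral_const]
    ring
  have hdens : Measurable fun r : Ioi (0 : ℝ) => ENNReal.ofReal (r.1 ^ (n + 1)) :=
    ENNReal.measurable_ofReal.comp ((measurable_subtype_coe).pow_const _)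
  have h3 : ∫⁻ r : Ioi (0 : ℝ), f r ∂(MeasureTheory.Measure.volumeIoiPow (n + 1)) =
      ∫⁻ r in Ioi (0 : ℝ), ENNReal.ofReal (r ^ (n + 1)) * f r := by
    rw [MeasureTheory.Measure.volumeIoiPow,
      lintegral_withDensity_eq_lintegral_mul _ hdens
        (show Measurable fun r : Ioi (0 : ℝ) => f r.1 from hf.comp measurable_subtype_coe)]
    exact lintegral_subtype_comap measurableSet_Ioi
      (fun r : ℝ => ENNReal.ofReal (r ^ (n + 1)) * f r)
  have h4 : ∫⁻ r in Ioi (0 : ℝ), ENNReal.ofReal (r ^ (n + 1)) * f r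
      = ∫⁻ r in Ioo (0 : ℝ) ε, ENNReal.ofReal (r ^ n) := by
    have hcong : ∀ r ∈ Ioi (0 : ℝ), ENNReal.ofReal (r ^ (n + 1)) * f r =
        (Iio ε).indicator (fun r => ENNReal.ofReal (r ^ n)) r := by
      intro r hr
      have hr0 : (0 : ℝ) < r := hr
      by_cases h : r < ε
      · rw [Set.indicator_of_mem (mem_Iio.mpr h), hf_def]
        show ENNReal.ofReal (r ^ (n + 1)) * (Iio ε).indicator _ r = _
        rw [Set.indicator_of_mem (mem_Iio.mpr h), ← ENNReal.ofReal_mul (by positivity)]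
        congr 1
        rw [pow_succ, mul_assoc, mul_inv_cancel₀ hr0.ne', mul_one]
      · rw [Set.indicator_of_notMem (fun hm => h (mem_Iio.mp hm)), hf_def]
        show ENNReal.ofReal (r ^ (n + 1)) * (Iio ε).indicator _ r = 0
        rw [Set.indicator_of_notMem (fun hm => h (mem_Iio.mp hm)), mul_zero]
    rw [setLIntegral_congr_fun_ae measurableSet_Ioi (ae_of_all _ hcong),
      lintegral_indicator measurableSet_Iio,
      Measure.restrict_restrict measurableSet_Iio, Set.inter_comm, Set.Ioi_inter_Iio]
  have h5 : ∫⁻ r in Ioo (0 : ℝ) ε, ENNReal.ofReal (r ^ n) =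
      ENNReal.ofReal (ε ^ (n + 1) / ((n : ℝ) + 1)) := by
    rw [← ofReal_integral_eq_lintegral_ofReal]
    · congr 1
      rw [← MeasureTheory.integral_Ioc_eq_integral_Ioo, ← intervalIntegral.integral_of_le hε.le,
        integral_pow]
      simp
    · exact (intervalIntegral.intervalIntegrable_pow n).1.mono_set Ioo_subset_Ioc_self
    · filter_upwards [ae_restrict_mem measurableSet_Ioo] with r hr using pow_nonneg hr.1.le n
  have key : ((n + 2 : ℕ) : ℝ≥0∞) * ENNReal.ofReal (ε ^ (n + 1) / ((n : ℝ) + 1)) ≤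
      2 * ENNReal.ofReal (ε ^ (n + 1)) := by
    rw [show ((n + 2 : ℕ) : ℝ≥0∞) = ENNReal.ofReal ((n : ℝ) + 2) by
        rw [← ENNReal.ofReal_natCast]; norm_num,
      show (2 : ℝ≥0∞) = ENNReal.ofReal (2 : ℝ) from (ENNReal.ofReal_ofNat 2).symm,
      ← ENNReal.ofReal_mul (by positivity), ← ENNReal.ofReal_mul (by norm_num)]
    refine ENNReal.ofReal_le_ofReal ?_
    have hA : (0 : ℝ) ≤ ε ^ (n + 1) := by positivity
    rw [mul_div_assoc', div_le_iff₀ (by positivity)]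
    nlinarith [hA, Nat.cast_nonneg (α := ℝ) n]
  rw [h1, h2, h3, h4, h5, MeasureTheory.Measure.toSphere_apply_univ, hdim]
  calc ((n + 2 : ℕ) : ℝ≥0∞) * volume (ball (0 : E) 1) *
        ENNReal.ofReal (ε ^ (n + 1) / ((n : ℝ) + 1))
      = volume (ball (0 : E) 1) *
        (((n + 2 : ℕ) : ℝ≥0∞) * ENNReal.ofReal (ε ^ (n + 1) / ((n : ℝ) + 1))) := by ring
    _ ≤ volume (ball (0 : E) 1) * (2 * ENNReal.ofReal (ε ^ (n + 1))) :=
        mul_le_mul_right key _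
    _ = 2 * volume (ball (0 : E) 1) * ENNReal.ofReal (ε ^ (n + 1)) := by ring

lemma kernel_int_bound (n : ℕ) {ε c : ℝ} (hε : 0 < ε) (hc : 0 ≤ c)
    (Ω : Set (EuclideanSpace ℝ (Fin (n + 2)))) (x : EuclideanSpace ℝ (Fin (n + 2))) :
    ∫⁻ y in Ω, (if ‖y - x‖ < ε ∧ y ≠ x
        then ENNReal.ofReal c / ENNReal.ofReal ‖y - x‖ else 0) ≤
      ENNReal.ofReal c * (2 * volume (ball (0 : EuclideanSpace ℝ (Fin (n + 2))) 1) *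
        ENNReal.ofReal (ε ^ (n + 1))) := by
  set G : EuclideanSpace ℝ (Fin (n + 2)) → ℝ≥0∞ :=
    fun z => (ball (0 : EuclideanSpace ℝ (Fin (n + 2))) ε).indicator
      (fun z => ENNReal.ofReal c * ENNReal.ofReal ‖z‖⁻¹) z with hG
  have step1 : (∫⁻ y in Ω, (if ‖y - x‖ < ε ∧ y ≠ x
      then ENNReal.ofReal c / ENNReal.ofReal ‖y - x‖ else 0)) ≤
      ∫⁻ y : EuclideanSpace ℝ (Fin (n + 2)), G (y - x) := by
    refine (setLIntegral_le_lintegral _ _).trans (lintegral_mono fun y => ?_)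
    by_cases h : ‖y - x‖ < ε ∧ y ≠ x
    · rw [if_pos h]
      show _ ≤ (ball (0 : EuclideanSpace ℝ (Fin (n + 2))) ε).indicator
        (fun z => ENNReal.ofReal c * ENNReal.ofReal ‖z‖⁻¹) (y - x)
      have hpos : 0 < ‖y - x‖ := by
        rw [norm_pos_iff, sub_ne_zero]; exact h.2
      rw [Set.indicator_of_mem (mem_ball_zero_iff.mpr h.1), div_eq_mul_inv,
        ← ENNReal.ofReal_inv_of_pos hpos]
    · rw [if_neg h]; exact zero_le
  have step2 : ∫⁻ y : EuclideanSpace ℝ (Fin (n + 2)), G (y - x) =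
      ∫⁻ z : EuclideanSpace ℝ (Fin (n + 2)), G z := by
    simp_rw [sub_eq_add_neg]
    exact lintegral_add_right_eq_self G (-x)
  have step3 : ∫⁻ z : EuclideanSpace ℝ (Fin (n + 2)), G z =
      ENNReal.ofReal c *
        ∫⁻ z in ball (0 : EuclideanSpace ℝ (Fin (n + 2))) ε, ENNReal.ofReal ‖z‖⁻¹ := by
    rw [hG, lintegral_indicator measurableSet_ball,
      lintegral_const_mul (ENNReal.ofReal c)
        (show Measurable fun z : EuclideanSpace ℝ (Fin (n + 2)) => ENNReal.ofReal ‖z‖⁻¹ from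
          measurable_norm.inv.ennreal_ofReal)]
  exact step1.trans (le_of_eq step2 |>.trans (le_of_eq step3 |>.trans
    (mul_le_mul_right (polar_bound n hε) _)))

lemma lintegral_cauchy {α : Type*} [MeasurableSpace α] (μ : Measure α) {K g : α → ℝ≥0∞}
    (hK : AEMeasurable K μ) (hg : AEMeasurable g μ) :
    (∫⁻ a, K a * g a ∂μ) ^ 2 ≤ (∫⁻ a, K a ∂μ) * ∫⁻ a, K a * (g a) ^ 2 ∂μ := by
  have h2 : Real.HolderConjugate 2 2 := Real.HolderConjugate.two_two
  have hKh : AEMeasurable (fun a => K a ^ ((1 : ℝ)/2)) μ := hK.pow_const _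
  have key := ENNReal.lintegral_mul_le_Lp_mul_Lq μ h2 hKh
    (hKh.mul (hg : AEMeasurable g μ))
  have e1 : ∀ a, ((fun a => K a ^ ((1 : ℝ)/2)) * fun a => K a ^ ((1 : ℝ)/2) * g a) a
      = K a * g a := by
    intro a
    simp only [Pi.mul_apply]
    rw [← mul_assoc, ← ENNReal.rpow_add_of_nonneg _ _ (by norm_num) (by norm_num)]
    norm_num
  have e2 : ∀ a, (K a ^ ((1 : ℝ)/2)) ^ (2 : ℝ) = K a := by
    intro a
    rw [← ENNReal.rpow_mul]
    norm_num
  have e3 : ∀ a, (K a ^ ((1 : ℝ)/2) * g a) ^ (2 : ℝ) = K a * (g a) ^ 2 := by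
    intro a
    rw [ENNReal.mul_rpow_of_nonneg _ _ (by norm_num), e2 a, ENNReal.rpow_two]
  simp only [Pi.mul_apply] at key e1
  simp only [e1, e2, e3] at key
  calc (∫⁻ a, K a * g a ∂μ) ^ 2
      ≤ ((∫⁻ a, K a ∂μ) ^ ((1 : ℝ)/2) * (∫⁻ a, K a * (g a) ^ 2 ∂μ) ^ ((1 : ℝ)/2)) ^ 2 :=
        pow_le_pow_left' key 2
    _ = (∫⁻ a, K a ∂μ) * ∫⁻ a, K a * (g a) ^ 2 ∂μ := by
        rw [mul_pow, ← ENNReal.rpow_natCast ((∫⁻ a, K a ∂μ) ^ ((1 : ℝ)/2)) 2,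
          ← ENNReal.rpow_natCast ((∫⁻ a, K a * (g a) ^ 2 ∂μ) ^ ((1 : ℝ)/2)) 2,
          ← ENNReal.rpow_mul, ← ENNReal.rpow_mul]
        norm_num

lemma schur_bound {α : Type*} [MeasurableSpace α] {μ : Measure α} [SFinite μ]
    {K : α → α → ℝ≥0∞} {g : α → ℝ≥0∞} {m : ℝ≥0∞}
    (hK : Measurable (Function.uncurry K)) (hg : Measurable g)
    (h1 : ∀ x, ∫⁻ y, K x y ∂μ ≤ m) (h2 : ∀ y, ∫⁻ x, K x y ∂μ ≤ m) :
    ∫⁻ x, (∫⁻ y, K x y * g y ∂μ) ^ 2 ∂μ ≤ m ^ 2 * ∫⁻ y, (g y) ^ 2 ∂μ := by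
  have hKx : ∀ x, Measurable (K x) := fun x => hK.of_uncurry_left
  have hmeas2 : Measurable (fun p : α × α => uncurry K p * (g p.2) ^ 2) :=
    hK.mul ((hg.comp measurable_snd).pow_const 2)
  have hmeasI : Measurable (fun x => ∫⁻ y, K x y * (g y) ^ 2 ∂μ) :=
    hmeas2.lintegral_prod_right'
  calc ∫⁻ x, (∫⁻ y, K x y * g y ∂μ) ^ 2 ∂μ
      ≤ ∫⁻ x, (∫⁻ y, K x y ∂μ) * ∫⁻ y, K x y * (g y) ^ 2 ∂μ ∂μ :=
        lintegral_mono fun x =>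
          lintegral_cauchy μ (hKx x).aemeasurable hg.aemeasurable
    _ ≤ ∫⁻ x, m * ∫⁻ y, K x y * (g y) ^ 2 ∂μ ∂μ :=
        lintegral_mono fun x => mul_le_mul_left (h1 x) _
    _ = m * ∫⁻ x, ∫⁻ y, K x y * (g y) ^ 2 ∂μ ∂μ := lintegral_const_mul m hmeasI
    _ = m * ∫⁻ y, ∫⁻ x, K x y * (g y) ^ 2 ∂μ ∂μ := by
        rw [lintegral_lintegral_swap hmeas2.aemeasurable]
    _ = m * ∫⁻ y, (g y) ^ 2 * ∫⁻ x, K x y ∂μ ∂μ := by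
        congr 1
        refine lintegral_congr fun y => ?_
        rw [lintegral_mul_const _ hK.of_uncurry_right, mul_comm]
    _ ≤ m * ∫⁻ y, (g y) ^ 2 * m ∂μ :=
        mul_le_mul_right (lintegral_mono fun y => mul_le_mul_right (h2 y) _) m
    _ = m ^ 2 * ∫⁻ y, (g y) ^ 2 ∂μ := by
        rw [lintegral_mul_const _ (hg.pow_const 2)]
        ring

lemma integral_le_toReal_lintegral {α : Type*} [MeasurableSpace α] {ν : Measure α} {h : α → ℝ}
    (h0 : 0 ≤ᵐ[ν] h) : ∫ a, h a ∂ν ≤ (∫⁻ a, ENNReal.ofReal (h a) ∂ν).toReal := by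
  by_cases hi : Integrable h ν
  · exact le_of_eq (integral_eq_lintegral_of_nonneg_ae h0 hi.aestronglyMeasurable)
  · rw [integral_undef hi]; positivity

lemma sq_add_le (a b : ℝ≥0∞) : (a + b) ^ 2 ≤ 4 * (a ^ 2 + b ^ 2) := by
  have h1 : a + b ≤ 2 * (a ⊔ b) := by
    rw [two_mul]; exact add_le_add le_sup_left le_sup_right
  calc (a + b) ^ 2 ≤ (2 * (a ⊔ b)) ^ 2 := pow_le_pow_left' h1 2
    _ = 4 * (a ⊔ b) ^ 2 := by ring
    _ ≤ 4 * (a ^ 2 + b ^ 2) := by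
        refine mul_le_mul_right ?_ 4
        rcases le_total a b with h | h
        · rw [sup_eq_right.mpr h]; exact le_add_self
        · rw [sup_eq_left.mpr h]; exact le_self_add

theorem stmt_14 (d : ℕ) (hd : d = 2 ∨ d = 3) (C : ℝ) (hC : 0 < C) :
    -- the constant `C'` is independent of `ε`
    ∃ C' > 0, ∀ (ε : ℝ), 0 < ε →
      ∀ (Ω : Set (EuclideanSpace ℝ (Fin d))), MeasurableSet Ω → Bornology.IsBounded Ω →
      ∀ (ρ : EuclideanSpace ℝ (Fin d) → EuclideanSpace ℝ (Fin d) → ℝ),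
        Measurable (Function.uncurry ρ) →
        (∀ x y : EuclideanSpace ℝ (Fin d), x ≠ y → ‖y - x‖ < ε →
          |ρ y x| ≤ C / (ε ^ (d + 1) *
            (volume (Metric.ball (0 : EuclideanSpace ℝ (Fin d)) 1)).toReal * ‖y - x‖)) →
        (∀ x y : EuclideanSpace ℝ (Fin d), ε ≤ ‖y - x‖ → ρ y x = 0) →
        ∀ w : EuclideanSpace ℝ (Fin d) → EuclideanSpace ℝ (Fin d),
          MemLp w 2 (volume.restrict Ω) →
          (∫ x in Ω, ‖∫ y in Ω,
              ρ y x • (⟪w y - w x, unitVec y x⟫ • unitVec y x)‖ ^ 2) ^ ((1 : ℝ) / 2) ≤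
            C' / ε ^ 2 * (∫ x in Ω, ‖w x‖ ^ 2) ^ ((1 : ℝ) / 2) := by
  obtain ⟨n, rfl⟩ : ∃ n, d = n + 2 := by rcases hd with h | h <;> exact ⟨d - 2, by omega⟩
  refine ⟨6 * C, by positivity, ?_⟩
  intro ε hε Ω hΩm hΩb ρ hρm hρbound hρsupp w hw
  have hV : volume (ball (0 : EuclideanSpace ℝ (Fin (n + 2))) 1) ≠ ⊤ := measure_ball_lt_top.ne
  have hVpos : 0 < volume (ball (0 : EuclideanSpace ℝ (Fin (n + 2))) 1) :=
    measure_ball_pos _ _ one_pos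
  have hωRpos : 0 < (volume (ball (0 : EuclideanSpace ℝ (Fin (n + 2))) 1)).toReal :=
    ENNReal.toReal_pos hVpos.ne' hV
  set c : ℝ := C / (ε ^ (n + 2 + 1) *
    (volume (ball (0 : EuclideanSpace ℝ (Fin (n + 2))) 1)).toReal) with hc_def
  have hc : 0 < c := by positivity
  set Kb : EuclideanSpace ℝ (Fin (n + 2)) → EuclideanSpace ℝ (Fin (n + 2)) → ℝ≥0∞ :=
    fun x y => if ‖y - x‖ < ε ∧ y ≠ x
      then ENNReal.ofReal c / ENNReal.ofReal ‖y - x‖ else 0 with hKb_def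
  set m : ℝ≥0∞ := ENNReal.ofReal (2 * C / ε ^ 2) with hm_def
  have hm_eq : ENNReal.ofReal c *
      (2 * volume (ball (0 : EuclideanSpace ℝ (Fin (n + 2))) 1) *
        ENNReal.ofReal (ε ^ (n + 1))) = m := by
    have h1 : (volume (ball (0 : EuclideanSpace ℝ (Fin (n + 2))) 1)).toReal ≠ 0 := hωRpos.ne'
    have h2 : ε ≠ 0 := hε.ne'
    have hre : c * (2 * (volume (ball (0 : EuclideanSpace ℝ (Fin (n + 2))) 1)).toReal *
        ε ^ (n + 1)) = 2 * C / ε ^ 2 := by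
      rw [hc_def]
      field_simp
      ring
    calc ENNReal.ofReal c * (2 * volume (ball (0 : EuclideanSpace ℝ (Fin (n + 2))) 1) *
          ENNReal.ofReal (ε ^ (n + 1)))
        = ENNReal.ofReal c * (ENNReal.ofReal (2 : ℝ) *
            ENNReal.ofReal (volume (ball (0 : EuclideanSpace ℝ (Fin (n + 2))) 1)).toReal *
            ENNReal.ofReal (ε ^ (n + 1))) := by
          rw [ENNReal.ofReal_toReal hV, ENNReal.ofReal_ofNat]
      _ = ENNReal.ofReal (c * (2 *
            (volume (ball (0 : EuclideanSpace ℝ (Fin (n + 2))) 1)).toReal * ε ^ (n + 1))) := by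
          rw [← ENNReal.ofReal_mul (by norm_num : (0 : ℝ) ≤ 2),
            ← ENNReal.ofReal_mul (by positivity), ← ENNReal.ofReal_mul hc.le]
      _ = m := by rw [hre, hm_def]
  -- measurable representative of w
  have hsm := hw.aestronglyMeasurable
  set w' := hsm.mk w with hw'_def
  have hw'sm : StronglyMeasurable w' := hsm.stronglyMeasurable_mk
  have hww' : w =ᵐ[volume.restrict Ω] w' := hsm.ae_eq_mk
  have hw'm : Measurable w' := hw'sm.measurable
  set g : EuclideanSpace ℝ (Fin (n + 2)) → ℝ≥0∞ := fun z => ENNReal.ofReal ‖w' z‖ with hg_def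
  have hg : Measurable g := hw'm.norm.ennreal_ofReal
  set W : ℝ≥0∞ := ∫⁻ x in Ω, (g x) ^ 2 with hW_def
  -- replace w by w' in the left-hand side
  have hcong : (∫ x in Ω, ‖∫ y in Ω,
        ρ y x • (⟪w y - w x, unitVec y x⟫ • unitVec y x)‖ ^ 2) =
      ∫ x in Ω, ‖∫ y in Ω,
        ρ y x • (⟪w' y - w' x, unitVec y x⟫ • unitVec y x)‖ ^ 2 := by
    refine integral_congr_ae ?_
    filter_upwards [hww'] with x hx
    have : (∫ y in Ω, ρ y x • (⟪w y - w x, unitVec y x⟫ • unitVec y x)) =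
        ∫ y in Ω, ρ y x • (⟪w' y - w' x, unitVec y x⟫ • unitVec y x) := by
      refine integral_congr_ae ?_
      filter_upwards [hww'] with y hy
      rw [hx, hy]
    rw [this]
  -- pointwise kernel bound
  have hpt : ∀ x y : EuclideanSpace ℝ (Fin (n + 2)),
      ENNReal.ofReal ‖ρ y x • (⟪w' y - w' x, unitVec y x⟫ • unitVec y x)‖ ≤
        Kb x y * (g y + g x) := by
    intro x y
    by_cases hyx : y = x
    · subst hyx
      simp [unitVec, sub_self]
    by_cases hlt : ‖y - x‖ < ε
    · have hne : (0 : ℝ) < ‖y - x‖ := by rw [norm_pos_iff, sub_ne_zero]; exact hyx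
      have hKbv : Kb x y = ENNReal.ofReal (c / ‖y - x‖) := by
        rw [hKb_def]
        show (if ‖y - x‖ < ε ∧ y ≠ x then _ else _) = _
        rw [if_pos ⟨hlt, hyx⟩, ENNReal.ofReal_div_of_pos hne]
      have hunit : ‖unitVec y x‖ ≤ 1 := by
        rw [unitVec, norm_smul, norm_inv, norm_norm, inv_mul_cancel₀ hne.ne']
      have h2 : |ρ y x| ≤ c / ‖y - x‖ := by
        refine (hρbound x y (Ne.symm hyx) hlt).trans (le_of_eq ?_)
        rw [hc_def, div_div]
      have hbound : ‖ρ y x • (⟪w' y - w' x, unitVec y x⟫ • unitVec y x)‖ ≤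
          (c / ‖y - x‖) * (‖w' y‖ + ‖w' x‖) := by
        rw [norm_smul, norm_smul, Real.norm_eq_abs, Real.norm_eq_abs]
        have h1 : |⟪w' y - w' x, unitVec y x⟫| * ‖unitVec y x‖ ≤ ‖w' y - w' x‖ := by
          have := abs_real_inner_le_norm (w' y - w' x) (unitVec y x)
          nlinarith [norm_nonneg (unitVec y x), norm_nonneg (w' y - w' x),
            abs_nonneg ⟪w' y - w' x, unitVec y x⟫]
        calc |ρ y x| * (|⟪w' y - w' x, unitVec y x⟫| * ‖unitVec y x‖)
            ≤ (c / ‖y - x‖) * ‖w' y - w' x‖ :=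
              mul_le_mul h2 h1 (by positivity) (by positivity)
          _ ≤ (c / ‖y - x‖) * (‖w' y‖ + ‖w' x‖) :=
              mul_le_mul_of_nonneg_left (norm_sub_le _ _) (by positivity)
      calc ENNReal.ofReal ‖ρ y x • (⟪w' y - w' x, unitVec y x⟫ • unitVec y x)‖
          ≤ ENNReal.ofReal ((c / ‖y - x‖) * (‖w' y‖ + ‖w' x‖)) :=
            ENNReal.ofReal_le_ofReal hbound
        _ = ENNReal.ofReal (c / ‖y - x‖) * ENNReal.ofReal (‖w' y‖ + ‖w' x‖) :=
            ENNReal.ofReal_mul (by positivity)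
        _ = Kb x y * (g y + g x) := by
            rw [hKbv, ENNReal.ofReal_add (norm_nonneg _) (norm_nonneg _)]
    · have hz : ρ y x = 0 := hρsupp x y (not_lt.mp hlt)
      simp [hz]
  -- measurability of the kernel
  have hKbm : Measurable (Function.uncurry Kb) := by
    have hset : MeasurableSet {p : EuclideanSpace ℝ (Fin (n + 2)) ×
        EuclideanSpace ℝ (Fin (n + 2)) | ‖p.2 - p.1‖ < ε ∧ p.2 ≠ p.1} := by
      refine MeasurableSet.inter ?_ ?_
      · exact measurableSet_lt ((measurable_snd.sub measurable_fst).norm) measurable_const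
      · exact (isClosed_eq continuous_snd continuous_fst).measurableSet.compl
    show Measurable fun p : EuclideanSpace ℝ (Fin (n + 2)) × EuclideanSpace ℝ (Fin (n + 2)) =>
      if ‖p.2 - p.1‖ < ε ∧ p.2 ≠ p.1
      then ENNReal.ofReal c / ENNReal.ofReal ‖p.2 - p.1‖ else 0
    exact Measurable.ite hset
      (measurable_const.div ((measurable_snd.sub measurable_fst).norm.ennreal_ofReal))
      measurable_const
  have hKb_sect : ∀ x, Measurable (Kb x) := fun x => hKbm.of_uncurry_left
  have hkb : ∀ x, ∫⁻ y in Ω, Kb x y ≤ m := fun x =>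
    le_trans (kernel_int_bound n hε hc.le Ω x) (le_of_eq hm_eq)
  have hsymm : ∀ x y, Kb x y = Kb y x := by
    intro x y
    rw [hKb_def]
    have h1 : (‖y - x‖ < ε ∧ y ≠ x) ↔ (‖x - y‖ < ε ∧ x ≠ y) := by
      rw [norm_sub_rev]
      exact and_congr Iff.rfl ⟨Ne.symm, Ne.symm⟩
    exact if_congr h1 (by rw [norm_sub_rev]) rfl
  set A : EuclideanSpace ℝ (Fin (n + 2)) → ℝ≥0∞ :=
    fun x => ∫⁻ y in Ω, Kb x y * g y with hA_def
  have hA_meas : Measurable A := (hKbm.mul (hg.comp measurable_snd)).lintegral_prod_right'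
  have hschur : ∫⁻ x in Ω, (A x) ^ 2 ≤ m ^ 2 * W :=
    schur_bound hKbm hg hkb
      (fun y => le_trans (le_of_eq (lintegral_congr fun x => hsymm x y)) (hkb y))
  have hIx : ∀ x, (∫⁻ y in Ω,
      ENNReal.ofReal ‖ρ y x • (⟪w' y - w' x, unitVec y x⟫ • unitVec y x)‖) ≤
      A x + m * g x := by
    intro x
    calc (∫⁻ y in Ω, ENNReal.ofReal ‖ρ y x • (⟪w' y - w' x, unitVec y x⟫ • unitVec y x)‖)
        ≤ ∫⁻ y in Ω, Kb x y * (g y + g x) := lintegral_mono fun y => hpt x y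
      _ = ∫⁻ y in Ω, (Kb x y * g y + Kb x y * g x) := by simp only [mul_add]
      _ = A x + ∫⁻ y in Ω, Kb x y * g x := by
          rw [lintegral_add_left (f := fun y => Kb x y * g y) ((hKb_sect x).mul hg)]
      _ = A x + (∫⁻ y in Ω, Kb x y) * g x := by
          rw [lintegral_mul_const _ (hKb_sect x)]
      _ ≤ A x + m * g x := add_le_add_right (mul_le_mul_left (hkb x) (g x)) (A x)
  have hsq : ∀ x, ENNReal.ofReal
      (‖∫ y in Ω, ρ y x • (⟪w' y - w' x, unitVec y x⟫ • unitVec y x)‖ ^ 2) ≤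
      (A x + m * g x) ^ 2 := by
    intro x
    rw [ENNReal.ofReal_pow (norm_nonneg _)]
    refine pow_le_pow_left' ?_ 2
    refine le_trans ?_ (hIx x)
    have hn := norm_integral_le_lintegral_norm (μ := volume.restrict Ω)
      (fun y => ρ y x • (⟪w' y - w' x, unitVec y x⟫ • unitVec y x))
    by_cases htop : (∫⁻ y in Ω,
        ENNReal.ofReal ‖ρ y x • (⟪w' y - w' x, unitVec y x⟫ • unitVec y x)‖) = ⊤
    · rw [htop]; exact le_top
    · exact (ENNReal.ofReal_le_ofReal hn).trans (le_of_eq (ENNReal.ofReal_toReal htop))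
  have hWtop : W ≠ ⊤ := by
    have h2 := hw.2
    rw [eLpNorm_eq_lintegral_rpow_enorm_toReal (by norm_num) (by norm_num)] at h2
    have hlt : (∫⁻ x in Ω, ‖w x‖ₑ ^ ((2 : ℝ≥0∞).toReal)) ≠ ⊤ := by
      intro htop
      rw [htop] at h2
      simp [ENNReal.top_rpow_of_pos (by norm_num : (0:ℝ) < 1 / (2 : ℝ≥0∞).toReal)] at h2
    have hWeq : W = ∫⁻ x in Ω, ‖w x‖ₑ ^ ((2 : ℝ≥0∞).toReal) := by
      rw [hW_def]
      refine lintegral_congr_ae ?_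
      filter_upwards [hww'] with x hx
      show (ENNReal.ofReal ‖w' x‖) ^ 2 = _
      rw [show ((2 : ℝ≥0∞).toReal) = (2 : ℝ) by norm_num, ENNReal.rpow_two, ← hx,
        ← ofReal_norm_eq_enorm]
    rw [hWeq]; exact hlt
  have hfin : ((3 : ℝ≥0∞) * m) ^ 2 * W ≠ ⊤ := by
    refine ENNReal.mul_ne_top (ENNReal.pow_ne_top ?_) hWtop
    exact ENNReal.mul_ne_top (by simp) ENNReal.ofReal_ne_top
  have hmain : (∫⁻ x in Ω, ENNReal.ofReal
      (‖∫ y in Ω, ρ y x • (⟪w' y - w' x, unitVec y x⟫ • unitVec y x)‖ ^ 2)) ≤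
      ((3 : ℝ≥0∞) * m) ^ 2 * W := by
    calc (∫⁻ x in Ω, ENNReal.ofReal
        (‖∫ y in Ω, ρ y x • (⟪w' y - w' x, unitVec y x⟫ • unitVec y x)‖ ^ 2))
        ≤ ∫⁻ x in Ω, (A x + m * g x) ^ 2 := lintegral_mono fun x => hsq x
      _ ≤ ∫⁻ x in Ω, 4 * ((A x) ^ 2 + (m * g x) ^ 2) :=
          lintegral_mono fun x => sq_add_le _ _
      _ = 4 * ((∫⁻ x in Ω, (A x) ^ 2) + ∫⁻ x in Ω, (m * g x) ^ 2) := by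
          rw [lintegral_const_mul 4 (f := fun x => A x ^ 2 + (m * g x) ^ 2)
            ((hA_meas.pow_const 2).add ((measurable_const.mul hg).pow_const 2)),
            lintegral_add_left (f := fun x => A x ^ 2) (hA_meas.pow_const 2)]
      _ ≤ 4 * ((m ^ 2 * W) + m ^ 2 * W) := by
          refine mul_le_mul_right (add_le_add hschur (le_of_eq ?_)) 4
          simp only [mul_pow]
          rw [lintegral_const_mul _ (hg.pow_const 2), hW_def]
      _ = 8 * (m ^ 2 * W) := by ring
      _ ≤ 9 * (m ^ 2 * W) := mul_le_mul_left (by norm_num) _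
      _ = ((3 : ℝ≥0∞) * m) ^ 2 * W := by ring
  have hreal : (∫ x in Ω,
      ‖∫ y in Ω, ρ y x • (⟪w' y - w' x, unitVec y x⟫ • unitVec y x)‖ ^ 2) ≤
      (((3 : ℝ≥0∞) * m) ^ 2 * W).toReal := by
    refine le_trans (integral_le_toReal_lintegral (ae_of_all _ fun x => by positivity)) ?_
    exact ENNReal.toReal_mono hfin hmain
  have hRHS : (∫ x in Ω, ‖w x‖ ^ 2) = W.toReal := by
    rw [integral_eq_lintegral_of_nonneg_ae (ae_of_all _ fun x => by positivity)
      ((continuous_pow 2).comp_aestronglyMeasurable hw.aestronglyMeasurable.norm)]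
    congr 1
    refine lintegral_congr_ae ?_
    filter_upwards [hww'] with x hx
    rw [hx, ENNReal.ofReal_pow (norm_nonneg _)]
  have hTval : ((((3 : ℝ≥0∞) * m) ^ 2) * W).toReal = (3 * (2 * C / ε ^ 2)) ^ 2 * W.toReal := by
    rw [ENNReal.toReal_mul, ENNReal.toReal_pow, ENNReal.toReal_mul, hm_def,
      ENNReal.toReal_ofReal (by positivity), ENNReal.toReal_ofNat]
  rw [hcong, hRHS]
  calc (∫ x in Ω,
      ‖∫ y in Ω, ρ y x • (⟪w' y - w' x, unitVec y x⟫ • unitVec y x)‖ ^ 2) ^ ((1 : ℝ) / 2)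
      ≤ ((3 * (2 * C / ε ^ 2)) ^ 2 * W.toReal) ^ ((1 : ℝ) / 2) := by
        refine Real.rpow_le_rpow (integral_nonneg fun x => by positivity) ?_ (by norm_num)
        rw [← hTval]; exact hreal
    _ = (3 * (2 * C / ε ^ 2)) * W.toReal ^ ((1 : ℝ) / 2) := by
        rw [Real.mul_rpow (by positivity) ENNReal.toReal_nonneg,
          ← Real.rpow_natCast (3 * (2 * C / ε ^ 2)) 2, ← Real.rpow_mul (by positivity)]
        norm_num
    _ = 6 * C / ε ^ 2 * W.toReal ^ ((1 : ℝ) / 2) := by ring
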